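/- In the two-player setting (players 0 and 1) with initial vertex v_0, let c ∈ ℕ. There exists a strategy σ_0 of player 0 such that every σ_0-fixed Nash equilibrium outcome π satisfies cost_0(π) ≤ c, if and only if there exists a c-witness. -/

import Mathlib

open scoped Classical

/-- An infinite play in the graph with edge relation `E`. -/
def IsPlay {V : Type*} (E : V → V → Prop) (π : ℕ → V) : Prop :=
  ∀ k, E (π k) (π (k + 1))

/-- The history `π 0, …, π k` as a list. -/
def histList {V : Type*} (π : ℕ → V) (k : ℕ) : List V :=
  (List.range (k + 1)).map π

/-- The accumulated weight of the first `n` edges of `π`. -/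
def pathWeight {V : Type*} (w : V → V → ℕ) (π : ℕ → V) (n : ℕ) : ℕ :=
  ∑ j ∈ Finset.range n, w (π j) (π (j + 1))

/-- The cost of a play for weight function `w` and target set `T` : the accumulated
weight up to the first visit of `T`, and `+∞` if `T` is never visited. -/
noncomputable def cost {V : Type*} (w : V → V → ℕ) (T : Set V) (π : ℕ → V) : ℕ∞ :=
  if h : ∃ n, π n ∈ T then (pathWeight w π (Nat.find h) : ℕ∞) else ⊤

/-- `σ` is a strategy for the player owning the set of vertices `Vi`. -/
def IsStrategy {V : Type*} (E : V → V → Prop) (Vi : Set V) (σ : List V → V) : Prop :=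
  ∀ (l : List V) (u : V), List.Chain' E (l ++ [u]) → u ∈ Vi → E u (σ (l ++ [u]))

/-- A play is consistent with the strategy `σ` of the player owning `Vi`. -/
def PlayConsistent {V : Type*} (Vi : Set V) (σ : List V → V) (π : ℕ → V) : Prop :=
  ∀ k, π k ∈ Vi → π (k + 1) = σ (histList π k)


/-- In the two-player setting (player 0 owns `V0`, player 1 owns `V0ᶜ`), the play `π`
is the outcome of a `σ0`-fixed Nash equilibrium: for some strategy `σ1` of player 1,
`π` is the outcome of `(σ0, σ1)` from `v0` and player 1 has no profitable deviation. -/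
def NEOutcome2 {V : Type*} (E : V → V → Prop) (V0 : Set V) (v0 : V)
    (w1 : V → V → ℕ) (T1 : Set V) (σ0 : List V → V) (π : ℕ → V) : Prop :=
  ∃ σ1 : List V → V, IsStrategy E V0ᶜ σ1 ∧
    IsPlay E π ∧ π 0 = v0 ∧ PlayConsistent V0 σ0 π ∧ PlayConsistent V0ᶜ σ1 π ∧
    ∀ τ1 : List V → V, IsStrategy E V0ᶜ τ1 →
      ∀ π' : ℕ → V, IsPlay E π' → π' 0 = v0 →
        PlayConsistent V0 σ0 π' → PlayConsistent V0ᶜ τ1 π' →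
        cost w1 T1 π ≤ cost w1 T1 π'

/-- The play `h · ρ` obtained by concatenating the history `h` with the play `ρ`. -/
def concatPlay {V : Type*} (h : List V) (ρ : ℕ → V) : ℕ → V := fun k =>
  if hk : k < h.length then h.get ⟨k, hk⟩ else ρ (k - h.length)

/-- Player 0 (owning `V0`) wins from `v` for the objective `Ω`. -/
def Player0Wins {V : Type*} (E : V → V → Prop) (V0 : Set V) (v : V)
    (Ω : (ℕ → V) → Prop) : Prop :=
  ∃ σ : List V → V, IsStrategy E V0 σ ∧
    ∀ ρ, IsPlay E ρ → ρ 0 = v → PlayConsistent V0 σ ρ → Ω ρ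

/-- `π` is a `c`-witness: a play from `v0` with `cost₀ π ≤ c` such that, with
`d = cost₁ π`, for every deviation `hv` of `π` (where `last h = π m` is owned by
player 1), player 0 wins from `v` for the objective
`cost₀(h·ρ) ≤ c or cost₁(h·ρ) > d`. -/
def IsCWitness {V : Type*} (E : V → V → Prop) (V0 : Set V) (v0 : V)
    (w0 w1 : V → V → ℕ) (T0 T1 : Set V) (c : ℕ) (π : ℕ → V) : Prop :=
  IsPlay E π ∧ π 0 = v0 ∧ cost w0 T0 π ≤ (c : ℕ∞) ∧
    ∀ (m : ℕ) (v : V), π m ∉ V0 → E (π m) v → v ≠ π (m + 1) →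
      Player0Wins E V0 v (fun ρ =>
        cost w0 T0 (concatPlay (histList π m) ρ) ≤ (c : ℕ∞) ∨
        cost w1 T1 π < cost w1 T1 (concatPlay (histList π m) ρ))

section Helpers
variable {V : Type*}

lemma histList_length (π : ℕ → V) (k : ℕ) : (histList π k).length = k + 1 := by
  simp [histList]

lemma histList_getElem (π : ℕ → V) (k j : ℕ) (h : j < (histList π k).length) :
    (histList π k)[j] = π j := by
  simp [histList]

lemma histList_getD (π : ℕ → V) (k j : ℕ) (h : j ≤ k) (d : V) :
    (histList π k).getD j d = π j := by
  rw [List.getD_eq_getElem _ _ (by simp [histList]; omega), histList_getElem]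

lemma histList_succ (π : ℕ → V) (k : ℕ) :
    histList π (k + 1) = histList π k ++ [π (k + 1)] := by
  simp [histList, List.range_succ]

lemma histList_zero (π : ℕ → V) : histList π 0 = [π 0] := by
  simp [histList, List.range_succ]

lemma histList_eq_of_agree {π π' : ℕ → V} {k : ℕ} (h : ∀ j, j ≤ k → π j = π' j) :
    histList π k = histList π' k := by
  apply List.ext_getElem (by simp [histList])
  intro j h1 h2
  rw [histList_getElem, histList_getElem]
  exact h j (by simp [histList] at h1; omega)

lemma histList_chain {E : V → V → Prop} {π : ℕ → V} (hπ : IsPlay E π) (k : ℕ) :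
    List.Chain' E (histList π k) := by
  rw [histList, List.Chain', List.isChain_map, List.isChain_range_succ]
  intro m _; exact hπ m

lemma histList_drop (π : ℕ → V) (m k : ℕ) :
    (histList π (m + 1 + k)).drop (m + 1) = histList (fun i => π (m + 1 + i)) k := by
  induction k with
  | zero =>
      rw [show m + 1 + 0 = m + 1 by ring, histList_succ,
        List.drop_left' (histList_length π m)]
      simp [histList_zero]
  | succ n ih =>
      rw [show m + 1 + (n+1) = (m+1+n) + 1 by ring, histList_succ, histList_succ,
        List.drop_append_of_le_length (by simp [histList_length]; omega), ih,
        Nat.add_assoc]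

end Helpers

section Helpers2
variable {V : Type*} {E : V → V → Prop}

lemma concatPlay_le {π : ℕ → V} {m k : ℕ} (hk : k ≤ m) (ρ : ℕ → V) :
    concatPlay (histList π m) ρ k = π k := by
  rw [concatPlay]
  rw [dif_pos (by rw [histList_length]; omega)]
  exact histList_getElem π m k _

lemma concatPlay_ge (π : ℕ → V) (m k : ℕ) (ρ : ℕ → V) :
    concatPlay (histList π m) ρ (m + 1 + k) = ρ k := by
  rw [concatPlay]
  rw [dif_neg (by rw [histList_length]; omega), histList_length]
  congr 1; omega

lemma isPlay_concatPlay {π ρ : ℕ → V} {m : ℕ} (hπ : IsPlay E π) (hρ : IsPlay E ρ)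
    (he : E (π m) (ρ 0)) : IsPlay E (concatPlay (histList π m) ρ) := by
  intro k
  rcases lt_trichotomy k m with h | h | h
  · rw [concatPlay_le (by omega), concatPlay_le (by omega)]; exact hπ k
  · subst h
    rw [concatPlay_le le_rfl, show k + 1 = k + 1 + 0 from rfl, concatPlay_ge]
    exact he
  · obtain ⟨j, rfl⟩ : ∃ j, k = m + 1 + j := ⟨k - (m+1), by omega⟩
    rw [concatPlay_ge, show m + 1 + j + 1 = m + 1 + (j + 1) by omega, concatPlay_ge]
    exact hρ j

lemma histList_concatPlay_le {π : ℕ → V} {m k : ℕ} (hk : k ≤ m) (ρ : ℕ → V) :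
    histList (concatPlay (histList π m) ρ) k = histList π k :=
  histList_eq_of_agree (fun j hj => concatPlay_le (by omega) ρ)

lemma histList_concatPlay_ge (π : ℕ → V) (m k : ℕ) (ρ : ℕ → V) :
    histList (concatPlay (histList π m) ρ) (m + 1 + k) = histList π m ++ histList ρ k := by
  apply List.ext_getElem (by simp [histList_length]; omega)
  intro j h1 h2
  rw [histList_getElem]
  rcases le_or_gt j m with hj | hj
  · rw [List.getElem_append_left (by rw [histList_length]; omega), histList_getElem,
      concatPlay_le hj]
  · obtain ⟨i, rfl⟩ : ∃ i, j = m + 1 + i := ⟨j - (m+1), by omega⟩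
    rw [List.getElem_append_right (by rw [histList_length]; omega), histList_getElem,
      concatPlay_ge]
    congr 1
    rw [histList_length]
    omega

end Helpers2

section Helpers3
variable {V : Type*} {E : V → V → Prop}

/-- A default strategy: always pick some successor of the last vertex. -/
noncomputable def fallback (hE : ∀ u : V, ∃ v, E u v) (d : V) : List V → V := fun l =>
  match l.getLast? with
  | some u => Classical.choose (hE u)
  | none => d

lemma fallback_spec (hE : ∀ u : V, ∃ v, E u v) (d : V) (l : List V) (u : V) :
    E u (fallback hE d (l ++ [u])) := by
  simp only [fallback, List.getLast?_concat]
  exact Classical.choose_spec (hE u)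

lemma isStrategy_fallback (hE : ∀ u : V, ∃ v, E u v) (d : V) (Vi : Set V) :
    IsStrategy E Vi (fallback hE d) := fun l u _ _ => fallback_spec hE d l u

/-- A list agrees with the play `π` on all its positions. -/
def AgreesWith (π : ℕ → V) (l : List V) : Prop :=
  ∀ j, j < l.length → l.getD j (π 0) = π j

lemma agreesWith_histList (π : ℕ → V) (k : ℕ) : AgreesWith π (histList π k) := by
  intro j hj
  rw [histList_length] at hj
  exact histList_getD π k j (by omega) _

/-- The strategy following the play `π` as long as the history is a prefix of it. -/
noncomputable def followStrat (hE : ∀ u : V, ∃ v, E u v) (π : ℕ → V) : List V → V := fun l =>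
  if AgreesWith π l then π l.length else fallback hE (π 0) l

lemma isStrategy_followStrat (hE : ∀ u : V, ∃ v, E u v) {π : ℕ → V} (hπ : IsPlay E π)
    (Vi : Set V) : IsStrategy E Vi (followStrat hE π) := by
  intro l u hc hu
  rw [followStrat]
  split_ifs with h
  · have hu' : u = π l.length := by
      have := h l.length (by simp)
      rw [List.getD_append_right _ _ _ _ le_rfl, Nat.sub_self, List.getD_cons_zero] at this
      exact this
    rw [hu', List.length_append, List.length_singleton]
    exact hπ l.length
  · exact fallback_spec hE (π 0) l u

lemma playConsistent_followStrat (hE : ∀ u : V, ∃ v, E u v) (π : ℕ → V) (Vi : Set V) :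
    PlayConsistent Vi (followStrat hE π) π := by
  intro k _
  rw [followStrat, if_pos (agreesWith_histList π k), histList_length]

end Helpers3

section Helpers4
variable {V : Type*} {E : V → V → Prop}

lemma histList_getLast? (π : ℕ → V) (k : ℕ) : (histList π k).getLast? = some (π k) := by
  cases k with
  | zero => rw [histList_zero]; rfl
  | succ n => rw [histList_succ, List.getLast?_concat]

lemma chain'_append_singleton {l : List V} {x : V} (h : List.Chain' E l)
    (he : ∀ a, l.getLast? = some a → E a x) : List.Chain' E (l ++ [x]) := by
  rw [List.Chain', List.isChain_append]
  exact ⟨h, List.isChain_singleton x, fun a ha b hb => by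
    rw [List.head?_cons] at hb
    cases hb
    exact he a ha⟩

noncomputable def stepFun (hE : ∀ u : V, ∃ v, E u v) (V0 : Set V) (σ : List V → V) (d : V)
    (l : List V) : V :=
  if l.getLast?.getD d ∈ V0 then σ l else fallback hE d l

noncomputable def buildList (hE : ∀ u : V, ∃ v, E u v) (V0 : Set V) (σ : List V → V)
    (v : V) : ℕ → List V
  | 0 => [v]
  | n + 1 => buildList hE V0 σ v n ++ [stepFun hE V0 σ v (buildList hE V0 σ v n)]

noncomputable def buildPlay (hE : ∀ u : V, ∃ v, E u v) (V0 : Set V) (σ : List V → V)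
    (v : V) : ℕ → V := fun n => (buildList hE V0 σ v n).getLast?.getD v

lemma buildPlay_histList (hE : ∀ u : V, ∃ v, E u v) (V0 : Set V) (σ : List V → V)
    (v : V) (n : ℕ) :
    histList (buildPlay hE V0 σ v) n = buildList hE V0 σ v n := by
  induction n with
  | zero => rw [histList_zero]; rfl
  | succ n ih =>
      have h2 : buildPlay hE V0 σ v (n + 1) = stepFun hE V0 σ v (buildList hE V0 σ v n) := by
        show (buildList hE V0 σ v (n + 1)).getLast?.getD v = _
        rw [buildList, List.getLast?_concat]
        rfl
      rw [histList_succ, ih, h2, buildList]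

lemma exists_play_consistent (hE : ∀ u : V, ∃ v, E u v) (V0 : Set V) {σ : List V → V}
    (hσ : IsStrategy E V0 σ) (v : V) :
    ∃ f : ℕ → V, IsPlay E f ∧ f 0 = v ∧ PlayConsistent V0 σ f := by
  refine ⟨buildPlay hE V0 σ v, ?_, rfl, ?_⟩
  all_goals
    have hstep : ∀ k, buildPlay hE V0 σ v (k + 1)
        = stepFun hE V0 σ v (histList (buildPlay hE V0 σ v) k) := by
      intro k
      rw [buildPlay_histList]
      show (buildList hE V0 σ v (k+1)).getLast?.getD v = _
      rw [buildList, List.getLast?_concat]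
      rfl
    have hlast : ∀ k, (histList (buildPlay hE V0 σ v) k).getLast?.getD v
        = buildPlay hE V0 σ v k := by
      intro k; rw [histList_getLast?]; rfl
  · -- IsPlay
    have key : ∀ k, List.Chain' E (histList (buildPlay hE V0 σ v) k) ∧
        E (buildPlay hE V0 σ v k) (buildPlay hE V0 σ v (k + 1)) := by
      intro k
      induction k with
      | zero =>
          constructor
          · rw [histList_zero]; exact List.isChain_singleton _
          · rw [hstep 0, stepFun, hlast 0]
            split_ifs with h0
            · have := hσ [] (buildPlay hE V0 σ v 0) (List.isChain_singleton _) h0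
              rw [List.nil_append] at this
              rwa [histList_zero]
            · have := fallback_spec hE v [] (buildPlay hE V0 σ v 0)
              rw [List.nil_append] at this
              rwa [histList_zero]
      | succ n ih =>
          have hchain : List.Chain' E (histList (buildPlay hE V0 σ v) (n + 1)) := by
            rw [histList_succ]
            exact chain'_append_singleton ih.1 (fun a ha => by
              rw [histList_getLast?] at ha; cases ha; exact ih.2)
          refine ⟨hchain, ?_⟩
          rw [hstep (n + 1), stepFun, hlast (n + 1)]
          split_ifs with h0
          · have := hσ (histList (buildPlay hE V0 σ v) n) (buildPlay hE V0 σ v (n + 1))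
              (by rw [← histList_succ]; exact hchain) h0
            rwa [← histList_succ] at this
          · have := fallback_spec hE v (histList (buildPlay hE V0 σ v) n)
              (buildPlay hE V0 σ v (n + 1))
            rwa [← histList_succ] at this
    exact fun k => (key k).2
  · -- PlayConsistent
    intro k hk
    rw [hstep k, stepFun, hlast k, if_pos hk]
end Helpers4

section Helpers5
variable {V : Type*} {E : V → V → Prop}

lemma neOutcome2_iff (hE : ∀ u : V, ∃ v, E u v) (V0 : Set V) (v0 : V)
    (w1 : V → V → ℕ) (T1 : Set V) (σ0 : List V → V) (π : ℕ → V) :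
    NEOutcome2 E V0 v0 w1 T1 σ0 π ↔
      (IsPlay E π ∧ π 0 = v0 ∧ PlayConsistent V0 σ0 π ∧
        ∀ π' : ℕ → V, IsPlay E π' → π' 0 = v0 → PlayConsistent V0 σ0 π' →
          cost w1 T1 π ≤ cost w1 T1 π') := by
  constructor
  · rintro ⟨σ1, hσ1, hplay, h0, hcons0, hcons1, hne⟩
    refine ⟨hplay, h0, hcons0, fun π' hp' h0' hc' => ?_⟩
    exact hne (followStrat hE π') (isStrategy_followStrat hE hp' V0ᶜ) π' hp' h0' hc'
      (playConsistent_followStrat hE π' V0ᶜ)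
  · rintro ⟨hplay, h0, hcons0, hmin⟩
    exact ⟨followStrat hE π, isStrategy_followStrat hE hplay V0ᶜ, hplay, h0, hcons0,
      playConsistent_followStrat hE π V0ᶜ,
      fun τ1 _ π' hp' h0' hc' _ => hmin π' hp' h0' hc'⟩

end Helpers5

section Forward
variable {V : Type*} {E : V → V → Prop}

lemma forward_dir (hE : ∀ u : V, ∃ v, E u v) (V0 : Set V) (v0 : V)
    (w0 w1 : V → V → ℕ) (T0 T1 : Set V) (c : ℕ) (σ0 : List V → V)
    (hσ0 : IsStrategy E V0 σ0)
    (H : ∀ π : ℕ → V, NEOutcome2 E V0 v0 w1 T1 σ0 π → cost w0 T0 π ≤ (c : ℕ∞)) :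
    ∃ π : ℕ → V, IsCWitness E V0 v0 w0 w1 T0 T1 c π := by
  set C : (ℕ → V) → Prop :=
    fun f => IsPlay E f ∧ f 0 = v0 ∧ PlayConsistent V0 σ0 f with hC
  have hCne : ∃ f, C f := exists_play_consistent hE V0 hσ0 v0
  obtain ⟨a, ⟨π, hπC, hπa⟩, hamin⟩ := (wellFounded_lt (α := ℕ∞)).has_min
    {x | ∃ f, C f ∧ cost w1 T1 f = x} ⟨_, hCne.choose, hCne.choose_spec, rfl⟩
  have hmin' : ∀ f, C f → cost w1 T1 π ≤ cost w1 T1 f := by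
    intro f hf
    rw [hπa]
    exact not_lt.1 (hamin _ ⟨f, hf, rfl⟩)
  have hNE : NEOutcome2 E V0 v0 w1 T1 σ0 π :=
    (neOutcome2_iff hE V0 v0 w1 T1 σ0 π).2
      ⟨hπC.1, hπC.2.1, hπC.2.2, fun π' h1 h2 h3 => hmin' π' ⟨h1, h2, h3⟩⟩
  refine ⟨π, hπC.1, hπC.2.1, H π hNE, ?_⟩
  intro m v hm hEv hnev
  refine ⟨fun l => if List.Chain' E (histList π m ++ l) then σ0 (histList π m ++ l)
      else fallback hE v0 l, ?_, ?_⟩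
  · intro l u hchain hu
    beta_reduce
    split_ifs with h
    · have h2 := hσ0 (histList π m ++ l) u (by rwa [← List.append_assoc] at h) hu
      rwa [List.append_assoc] at h2
    · exact fallback_spec hE v0 l u
  · intro ρ hρplay hρ0 hρcons
    have hgplay : IsPlay E (concatPlay (histList π m) ρ) :=
      isPlay_concatPlay hπC.1 hρplay (hρ0 ▸ hEv)
    have hg0 : concatPlay (histList π m) ρ 0 = v0 := by
      rw [concatPlay_le (Nat.zero_le m)]; exact hπC.2.1
    have hgcons : PlayConsistent V0 σ0 (concatPlay (histList π m) ρ) := by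
      intro k hk
      rcases lt_trichotomy k m with h | h | h
      · rw [concatPlay_le h.le] at hk
        rw [concatPlay_le (by omega : k + 1 ≤ m), histList_concatPlay_le h.le]
        exact hπC.2.2 k hk
      · subst h
        rw [concatPlay_le le_rfl] at hk
        exact absurd hk hm
      · obtain ⟨j, rfl⟩ : ∃ j, k = m + 1 + j := ⟨k - (m + 1), by omega⟩
        rw [concatPlay_ge] at hk
        have hchain : List.Chain' E (histList π m ++ histList ρ j) := by
          rw [← histList_concatPlay_ge]
          exact histList_chain hgplay _
        have h3 := hρcons j hk
        beta_reduce at h3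
        rw [if_pos hchain] at h3
        rw [show m + 1 + j + 1 = m + 1 + (j + 1) by omega, concatPlay_ge, h3,
          histList_concatPlay_ge]
    rcases (hmin' _ ⟨hgplay, hg0, hgcons⟩).lt_or_eq with hlt | heq
    · exact Or.inr hlt
    · refine Or.inl (H _ ((neOutcome2_iff hE V0 v0 w1 T1 σ0 _).2
        ⟨hgplay, hg0, hgcons, fun f h1 h2 h3 => ?_⟩))
      rw [← heq]
      exact hmin' f ⟨h1, h2, h3⟩

end Forward

section Backward
variable {V : Type*} {E : V → V → Prop}

lemma backward_dir (hE : ∀ u : V, ∃ v, E u v) (V0 : Set V) (v0 : V)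
    (w0 w1 : V → V → ℕ) (T0 T1 : Set V) (c : ℕ) (π : ℕ → V)
    (hw : IsCWitness E V0 v0 w0 w1 T0 T1 c π) :
    ∃ σ0 : List V → V, IsStrategy E V0 σ0 ∧
      ∀ π' : ℕ → V, NEOutcome2 E V0 v0 w1 T1 σ0 π' → cost w0 T0 π' ≤ (c : ℕ∞) := by
  obtain ⟨hplay, h0, hcost, hdev⟩ := hw
  -- total version of the deviation winning strategies
  set devS : ℕ → V → List V → V := fun m v =>
    if hc2 : π m ∉ V0 ∧ E (π m) v ∧ v ≠ π (m + 1) then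
      Classical.choose (hdev m v hc2.1 hc2.2.1 hc2.2.2)
    else fallback hE v0 with hdevS
  have devS_strat : ∀ m v, IsStrategy E V0 (devS m v) := by
    intro m v
    rw [hdevS]
    beta_reduce
    split_ifs with h
    · exact (Classical.choose_spec (hdev m v h.1 h.2.1 h.2.2)).1
    · exact isStrategy_fallback hE v0 V0
  have devS_win : ∀ m v (h1 : π m ∉ V0) (h2 : E (π m) v) (h3 : v ≠ π (m + 1)),
      ∀ ρ : ℕ → V, IsPlay E ρ → ρ 0 = v → PlayConsistent V0 (devS m v) ρ →
        cost w0 T0 (concatPlay (histList π m) ρ) ≤ (c : ℕ∞) ∨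
        cost w1 T1 π < cost w1 T1 (concatPlay (histList π m) ρ) := by
    intro m v h1 h2 h3 ρ hρ1 hρ2 hρ3
    have hds : devS m v = Classical.choose (hdev m v h1 h2 h3) := by
      rw [hdevS]; beta_reduce; rw [dif_pos ⟨h1, h2, h3⟩]
    rw [hds] at hρ3
    exact (Classical.choose_spec (hdev m v h1 h2 h3)).2 ρ hρ1 hρ2 hρ3
  -- the strategy of player 0
  set σ0 : List V → V := fun h =>
    if hdiv : ∃ j, j < h.length ∧ h.getD j v0 ≠ π j then
      if 0 < Nat.find hdiv ∧ π (Nat.find hdiv - 1) ∉ V0 ∧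
          E (π (Nat.find hdiv - 1)) (h.getD (Nat.find hdiv) v0) then
        devS (Nat.find hdiv - 1) (h.getD (Nat.find hdiv) v0) (h.drop (Nat.find hdiv))
      else fallback hE v0 h
    else π h.length with hσ0def
  -- evaluation on histories of π
  have hσagree : ∀ k, σ0 (histList π k) = π (k + 1) := by
    intro k
    rw [hσ0def]
    beta_reduce
    rw [dif_neg, histList_length]
    rintro ⟨j, hj1, hj2⟩
    rw [histList_length] at hj1
    exact hj2 (histList_getD π k j (by omega) v0)
  have hπcons : PlayConsistent V0 σ0 π := fun k _ => (hσagree k).symm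
  refine ⟨σ0, ?_, ?_⟩
  · -- σ0 is a strategy
    intro l u hchain hu
    rw [hσ0def]
    beta_reduce
    split_ifs with h1 h2
    · -- deviation case
      have hj := Nat.find_spec h1
      set j := Nat.find h1 with hj'
      have hjl : j ≤ l.length := by
        have := hj.1
        rw [List.length_append, List.length_singleton] at this
        omega
      have hdrop : (l ++ [u]).drop j = l.drop j ++ [u] :=
        List.drop_append_of_le_length hjl
      have := devS_strat (j - 1) ((l ++ [u]).getD j v0) (l.drop j) u
        (by rw [← hdrop]; exact hchain.drop j) hu
      rwa [← hdrop] at this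
    · exact fallback_spec hE v0 l u
    · -- no deviation: history follows π
      push_neg at h1
      have hu' : u = π l.length := by
        have := h1 l.length (by simp)
        rwa [List.getD_append_right _ _ _ _ le_rfl, Nat.sub_self,
          List.getD_cons_zero] at this
      rw [List.length_append, List.length_singleton, hu']
      exact hplay l.length
  · -- every σ0-fixed NE outcome is cheap
    intro π' hNE
    rw [neOutcome2_iff hE V0 v0 w1 T1 σ0 π'] at hNE
    obtain ⟨hplay', h0', hcons', hmin'⟩ := hNE
    have hminπ : cost w1 T1 π' ≤ cost w1 T1 π := hmin' π hplay h0 hπcons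
    by_cases hsame : ∀ k, π' k = π k
    · have : π' = π := funext hsame
      rw [this]
      exact hcost
    · push_neg at hsame
      have hk0 : 0 < Nat.find hsame := Nat.pos_of_ne_zero (by
        intro h
        exact (h ▸ Nat.find_spec hsame) (by rw [h0', h0]))
      obtain ⟨m, hm⟩ : ∃ m, Nat.find hsame = m + 1 := ⟨Nat.find hsame - 1, by omega⟩
      have hagree : ∀ j, j ≤ m → π' j = π j := by
        intro j hj
        have := Nat.find_min hsame (m := j) (by omega)
        push_neg at this
        exact this
      have hne1 : π' (m + 1) ≠ π (m + 1) := hm ▸ Nat.find_spec hsame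
      have hmV0 : π m ∉ V0 := by
        intro hmem
        apply hne1
        have h2 : π' m ∈ V0 := by rwa [hagree m le_rfl]
        have h3 := hcons' m h2
        rw [histList_eq_of_agree (fun j hj => hagree j hj), hσagree m] at h3
        exact h3
      have hEv : E (π m) (π' (m + 1)) := by
        have := hplay' m
        rwa [hagree m le_rfl] at this
      -- the suffix play after the deviation
      set ρ : ℕ → V := fun i => π' (m + 1 + i) with hρdef
      have hρplay : IsPlay E ρ := by
        intro k
        rw [hρdef]
        beta_reduce
        rw [show m + 1 + (k + 1) = (m + 1 + k) + 1 by omega]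
        exact hplay' (m + 1 + k)
      have hρcons : PlayConsistent V0 (devS m (π' (m + 1))) ρ := by
        intro k hk
        have h2 := hcons' (m + 1 + k) hk
        -- evaluate σ0 on histList π' (m + 1 + k)
        have hdiv : ∃ j, j < (histList π' (m + 1 + k)).length ∧
            (histList π' (m + 1 + k)).getD j v0 ≠ π j := by
          refine ⟨m + 1, by rw [histList_length]; omega, ?_⟩
          rw [histList_getD π' _ _ (by omega) v0]
          exact hne1
        have hfind : Nat.find hdiv = m + 1 := by
          rw [Nat.find_eq_iff]
          constructor
          · exact ⟨by rw [histList_length]; omega,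
              by rw [histList_getD π' _ _ (by omega) v0]; exact hne1⟩
          · intro n hn hP
            exact hP.2 (by rw [histList_getD π' _ _ (by omega) v0, hagree n (by omega)])
        have heval : σ0 (histList π' (m + 1 + k)) = devS m (π' (m + 1)) (histList ρ k) := by
          rw [hσ0def]
          beta_reduce
          rw [dif_pos hdiv, hfind]
          rw [if_pos]
          · rw [Nat.add_sub_cancel, histList_getD π' _ _ (by omega) v0, histList_drop]
          · refine ⟨by omega, ?_, ?_⟩
            · rwa [Nat.add_sub_cancel]
            · rw [Nat.add_sub_cancel, histList_getD π' _ _ (by omega) v0]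
              exact hEv
        rw [heval] at h2
        rw [hρdef]
        beta_reduce
        rw [show m + 1 + (k + 1) = (m + 1 + k) + 1 by omega]
        exact h2
      have hwin := devS_win m (π' (m + 1)) hmV0 hEv hne1 ρ hρplay (by rw [hρdef]) hρcons
      have hconcat : concatPlay (histList π m) ρ = π' := by
        funext k
        rcases le_or_gt k m with h | h
        · rw [concatPlay_le h, hagree k h]
        · obtain ⟨i, rfl⟩ : ∃ i, k = m + 1 + i := ⟨k - (m + 1), by omega⟩
          rw [concatPlay_ge]
      rw [hconcat] at hwin
      rcases hwin with h | h
      · exact h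
      · exact absurd hminπ (by rw [not_le]; exact h)

end Backward

/-- There is a strategy `σ0` of player 0 such that every `σ0`-fixed Nash equilibrium
outcome `π` has `cost₀ π ≤ c`, iff there is a `c`-witness. -/
theorem ncns_iff_cwitness {V : Type*} [Fintype V] (E : V → V → Prop)
    (hE : ∀ u, ∃ v, E u v) (V0 : Set V) (v0 : V)
    (w0 w1 : V → V → ℕ) (T0 T1 : Set V) (c : ℕ) :
    (∃ σ0 : List V → V, IsStrategy E V0 σ0 ∧
        ∀ π : ℕ → V, NEOutcome2 E V0 v0 w1 T1 σ0 π → cost w0 T0 π ≤ (c : ℕ∞)) ↔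
      ∃ π : ℕ → V, IsCWitness E V0 v0 w0 w1 T0 T1 c π := by
  constructor
  · rintro ⟨σ0, hσ0, H⟩
    exact forward_dir hE V0 v0 w0 w1 T0 T1 c σ0 hσ0 H
  · rintro ⟨π, hw⟩
    exact backward_dir hE V0 v0 w0 w1 T0 T1 c π hw
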